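/- Let X be a finite-dimensional normed space, Y a Banach space, J an ideal on ℕ, and (T_k) a sequence of bounded linear operators from X to Y such that for every x ∈ X, the sequence (‖T_k x‖) J-converges to 0. Then the sequence of operator norms (‖T_k‖) J-converges to 0. -/

import Mathlib

lemma ideal_iUnion_mem {J : Set (Set ℕ)}
    (hJ_union : ∀ S T : Set ℕ, S ∈ J → T ∈ J → S ∪ T ∈ J)
    (hJ_fin : ∀ S : Set ℕ, S.Finite → S ∈ J)
    {ι : Type*} [Fintype ι] (f : ι → Set ℕ) (hf : ∀ i, f i ∈ J) :
    (⋃ i, f i) ∈ J := by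
  classical
  have key : ∀ s : Finset ι, (⋃ i ∈ s, f i) ∈ J := by
    intro s
    induction s using Finset.induction with
    | empty => simpa using hJ_fin ∅ Set.finite_empty
    | insert _ _ h ih =>
        rw [Finset.set_biUnion_insert]
        exact hJ_union _ _ (hf _) ih
  simpa using key Finset.univ

/-- If `X` is finite dimensional and `(‖T k x‖)` `J`-converges to `0` for every `x ∈ X`,
then the operator norms `(‖T k‖)` `J`-converge to `0`. -/
theorem stmt3 {X Y : Type*} [NormedAddCommGroup X] [NormedSpace ℝ X] [FiniteDimensional ℝ X]
    [NormedAddCommGroup Y] [NormedSpace ℝ Y]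
    (J : Set (Set ℕ))
    (hJ_sub : ∀ S T : Set ℕ, S ∈ J → T ⊆ S → T ∈ J)
    (hJ_union : ∀ S T : Set ℕ, S ∈ J → T ∈ J → S ∪ T ∈ J)
    (hJ_fin : ∀ S : Set ℕ, S.Finite → S ∈ J)
    (hJ_proper : Set.univ ∉ J)
    (T : ℕ → X →L[ℝ] Y)
    (h : ∀ x : X, ∀ ε : ℝ, 0 < ε → {k | ε ≤ ‖T k x‖} ∈ J) :
    ∀ ε : ℝ, 0 < ε → {k | ε ≤ ‖T k‖} ∈ J := by
  classical
  intro ε hε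
  set n := Module.finrank ℝ X with hn
  set b : Module.Basis (Fin n) ℝ X := Module.finBasis ℝ X with hb
  set c : Fin n → (X →L[ℝ] ℝ) :=
    fun i => LinearMap.toContinuousLinearMap (b.coord i) with hc
  set M : ℝ := 1 + ∑ i, ‖c i‖ with hM
  have hMpos : 0 < M := by
    have : (0:ℝ) ≤ ∑ i, ‖c i‖ := Finset.sum_nonneg fun i _ => norm_nonneg _
    linarith
  set δ : ℝ := ε / M with hδ
  have hδpos : 0 < δ := div_pos hε hMpos
  -- the union of the bad sets for the basis vectors
  set S : Set ℕ := ⋃ i, {k | δ ≤ ‖T k (b i)‖} with hS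
  have hSJ : S ∈ J :=
    ideal_iUnion_mem hJ_union hJ_fin _ (fun i => h (b i) δ hδpos)
  refine hJ_sub S _ hSJ ?_
  intro k hk
  by_contra hkS
  -- then for every i, ‖T k (b i)‖ < δ
  have hsmall : ∀ i, ‖T k (b i)‖ < δ := by
    intro i
    by_contra hge
    push_neg at hge
    exact hkS (Set.mem_iUnion.mpr ⟨i, hge⟩)
  -- bound the operator norm
  have hbound : ‖T k‖ ≤ ∑ i, ‖c i‖ * ‖T k (b i)‖ := by
    apply ContinuousLinearMap.opNorm_le_bound
    · exact Finset.sum_nonneg fun i _ =>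
        mul_nonneg (norm_nonneg _) (norm_nonneg _)
    · intro x
      have hx : x = ∑ i, b.repr x i • b i := (b.sum_repr x).symm
      calc ‖T k x‖ = ‖∑ i, b.repr x i • T k (b i)‖ := by
            conv_lhs => rw [hx]
            rw [map_sum]
            simp [map_smul]
        _ ≤ ∑ i, ‖b.repr x i • T k (b i)‖ := norm_sum_le _ _
        _ = ∑ i, ‖b.repr x i‖ * ‖T k (b i)‖ := by simp [norm_smul]
        _ ≤ ∑ i, (‖c i‖ * ‖x‖) * ‖T k (b i)‖ := by
            apply Finset.sum_le_sum
            intro i _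
            apply mul_le_mul_of_nonneg_right _ (norm_nonneg _)
            have : ‖(c i) x‖ ≤ ‖c i‖ * ‖x‖ := (c i).le_opNorm x
            simpa [hc, Module.Basis.coord_apply] using this
        _ = (∑ i, ‖c i‖ * ‖T k (b i)‖) * ‖x‖ := by
            rw [Finset.sum_mul]
            exact Finset.sum_congr rfl fun i _ => by ring
  have hsum : ∑ i, ‖c i‖ * ‖T k (b i)‖ ≤ (∑ i, ‖c i‖) * δ := by
    rw [Finset.sum_mul]
    apply Finset.sum_le_sum
    intro i _
    exact mul_le_mul_of_nonneg_left (le_of_lt (hsmall i)) (norm_nonneg _)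
  have hlt : (∑ i, ‖c i‖) * δ < ε := by
    have : (∑ i, ‖c i‖) * δ < M * δ := by
      apply mul_lt_mul_of_pos_right _ hδpos
      linarith
    have hMδ : M * δ = ε := by
      rw [hδ]
      field_simp [hMpos.ne']
    linarith
  have : ε ≤ ‖T k‖ := hk
  linarith
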